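/- Every subspace S of ℂ⁴ that equals its own J-orthogonal complement is of the form S_U = {v + vU : v ∈ V₊} for some unitary operator U : V₊ → V₋. -/

import Mathlib

open Matrix Complex

noncomputable def matJ : Matrix (Fin 4) (Fin 4) ℂ :=
  !![0, I, 0, 0; -I, 0, 0, 0; 0, 0, 0, I; 0, 0, -I, 0]

noncomputable def Pplus : Matrix (Fin 4) (Fin 4) ℂ := (1/2 : ℂ) • (1 + matJ)
noncomputable def Pminus : Matrix (Fin 4) (Fin 4) ℂ := (1/2 : ℂ) • (1 - matJ)
noncomputable def Vplus : Submodule ℂ (Fin 4 → ℂ) := LinearMap.range (Matrix.vecMulLinear Pplus)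
noncomputable def Vminus : Submodule ℂ (Fin 4 → ℂ) := LinearMap.range (Matrix.vecMulLinear Pminus)

/-- `U` is a unitary map from `V₊` onto `V₋` (w.r.t. the restricted standard
Hermitian inner products of rows). -/
def IsUnitaryPlusMinus (U : (Fin 4 → ℂ) →ₗ[ℂ] (Fin 4 → ℂ)) : Prop :=
  (∀ v ∈ Vplus, U v ∈ Vminus) ∧
  (∀ v ∈ Vplus, ∀ w ∈ Vplus, (U v) ⬝ᵥ star (U w) = v ⬝ᵥ star w) ∧
  (∀ w ∈ Vminus, ∃ v ∈ Vplus, U v = w)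

/-- `S_U = {v + vU : v ∈ V₊}`. -/
def SU (U : (Fin 4 → ℂ) →ₗ[ℂ] (Fin 4 → ℂ)) : Set (Fin 4 → ℂ) :=
  {x | ∃ v ∈ Vplus, x = v + U v}

/-! ### Auxiliary matrix identities -/

lemma hJJ : matJ * matJ = 1 := by
  ext i j
  fin_cases i <;> fin_cases j <;>
    simp [matJ, Matrix.mul_apply, Fin.sum_univ_four, Matrix.one_apply, Matrix.vecHead,
      Matrix.vecTail]

lemma hJH : matJᴴ = matJ := by
  ext i j
  fin_cases i <;> fin_cases j <;> simp [matJ, Matrix.vecHead, Matrix.vecTail]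

lemma hPsum : Pplus + Pminus = 1 := by
  simp [Pplus, Pminus, smul_add, smul_sub]
  module

lemma hPdiff : Pplus - Pminus = matJ := by
  simp [Pplus, Pminus]
  module

lemma hPP : Pplus * Pplus = Pplus := by
  simp only [Pplus, smul_mul_assoc, mul_smul_comm, mul_add, add_mul, one_mul, mul_one, hJJ]
  module

lemma hMM : Pminus * Pminus = Pminus := by
  simp only [Pminus, smul_mul_assoc, mul_smul_comm, mul_sub, sub_mul, one_mul, mul_one, hJJ]
  module

lemma hPM : Pplus * Pminus = 0 := by
  simp only [Pplus, Pminus, smul_mul_assoc, mul_smul_comm, mul_sub, add_mul, one_mul, mul_one, hJJ]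
  module

lemma hMP : Pminus * Pplus = 0 := by
  simp only [Pplus, Pminus, smul_mul_assoc, mul_smul_comm, mul_add, sub_mul, one_mul, mul_one, hJJ]
  module

lemma hPH : Pplusᴴ = Pplus := by
  simp [Pplus, conjTranspose_smul, hJH]

lemma hMH : Pminusᴴ = Pminus := by
  simp [Pminus, conjTranspose_smul, hJH]

lemma hPJ : Pplus * matJ = Pplus := by
  simp only [Pplus, smul_mul_assoc, add_mul, one_mul, hJJ]
  module

lemma hMJ : Pminus * matJ = -Pminus := by
  simp only [Pminus, smul_mul_assoc, sub_mul, one_mul, hJJ]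
  module

/-! ### Membership, decomposition and the form -/

lemma mem_Vplus (v : Fin 4 → ℂ) : v ∈ Vplus ↔ v ᵥ* Pplus = v := by
  constructor
  · rintro ⟨u, rfl⟩
    simp [Matrix.vecMulLinear_apply, Matrix.vecMul_vecMul, hPP]
  · intro h; exact ⟨v, h⟩

lemma mem_Vminus (v : Fin 4 → ℂ) : v ∈ Vminus ↔ v ᵥ* Pminus = v := by
  constructor
  · rintro ⟨u, rfl⟩
    simp [Matrix.vecMulLinear_apply, Matrix.vecMul_vecMul, hMM]
  · intro h; exact ⟨v, h⟩

lemma decomp (x : Fin 4 → ℂ) : x = x ᵥ* Pplus + x ᵥ* Pminus := by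
  rw [← Matrix.vecMul_add, hPsum, Matrix.vecMul_one]

lemma dot_PM (v w : Fin 4 → ℂ) : (v ᵥ* Pplus) ⬝ᵥ star (w ᵥ* Pminus) = 0 := by
  rw [Matrix.star_vecMul, hMH, Matrix.dotProduct_mulVec, Matrix.vecMul_vecMul, hPM]
  simp

lemma dot_MP (v w : Fin 4 → ℂ) : (v ᵥ* Pminus) ⬝ᵥ star (w ᵥ* Pplus) = 0 := by
  rw [Matrix.star_vecMul, hPH, Matrix.dotProduct_mulVec, Matrix.vecMul_vecMul, hMP]
  simp

/-- The form `B x y = (x J) ⬝ star y` decomposes. -/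
lemma form_decomp (x y : Fin 4 → ℂ) :
    x ᵥ* matJ ⬝ᵥ star y =
      (x ᵥ* Pplus) ⬝ᵥ star (y ᵥ* Pplus) - (x ᵥ* Pminus) ⬝ᵥ star (y ᵥ* Pminus) := by
  have h1 : x ᵥ* matJ = x ᵥ* Pplus - x ᵥ* Pminus := by
    rw [← Matrix.vecMul_sub, hPdiff]
  have h2 : star y = star (y ᵥ* Pplus) + star (y ᵥ* Pminus) := by
    rw [← star_add, ← decomp]
  rw [h1, h2, sub_dotProduct, dotProduct_add, dotProduct_add,
    dot_PM, dot_MP]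
  ring

open scoped ComplexOrder in
lemma self_dot_zero (v : Fin 4 → ℂ) (h : v ⬝ᵥ star v = 0) : v = 0 := by
  have : star (star v) ⬝ᵥ star v = 0 := by simpa using h
  have := dotProduct_star_self_eq_zero.mp this
  simpa using congrArg star this

/-! ### Dimensions of `Vplus` and `Vminus` -/

lemma vecMul_smulM (c : ℂ) (M : Matrix (Fin 4) (Fin 4) ℂ) (v : Fin 4 → ℂ) :
    v ᵥ* (c • M) = c • (v ᵥ* M) := by
  funext j; simp [Matrix.vecMul, dotProduct, Finset.mul_sum]; ring_nf
  simp [mul_comm, mul_left_comm]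

lemma mem_Vplus_J (v : Fin 4 → ℂ) : v ∈ Vplus ↔ v ᵥ* matJ = v := by
  rw [mem_Vplus]
  constructor
  · intro h
    conv_lhs => rw [← h]
    rw [Matrix.vecMul_vecMul, hPJ, h]
  · intro h
    show v ᵥ* ((1/2 : ℂ) • (1 + matJ)) = v
    rw [vecMul_smulM, Matrix.vecMul_add, Matrix.vecMul_one, h]
    module

lemma mem_Vminus_J (v : Fin 4 → ℂ) : v ∈ Vminus ↔ v ᵥ* matJ = -v := by
  rw [mem_Vminus]
  constructor
  · intro h
    conv_lhs => rw [← h]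
    rw [Matrix.vecMul_vecMul, hMJ, Matrix.vecMul_neg, h]
  · intro h
    show v ᵥ* ((1/2 : ℂ) • (1 - matJ)) = v
    rw [vecMul_smulM, Matrix.vecMul_sub, Matrix.vecMul_one, h]
    module

noncomputable def aP : Fin 4 → ℂ := ![-I, 1, 0, 0]
noncomputable def bP : Fin 4 → ℂ := ![0, 0, -I, 1]
noncomputable def aM : Fin 4 → ℂ := ![I, 1, 0, 0]
noncomputable def bM : Fin 4 → ℂ := ![0, 0, I, 1]

lemma vecMulJ_coord (v : Fin 4 → ℂ) :
    v ᵥ* matJ = ![-I * v 1, I * v 0, -I * v 3, I * v 2] := by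
  funext i
  fin_cases i <;>
    simp [matJ, Matrix.vecMul, dotProduct, Fin.sum_univ_four, Matrix.vecHead,
      Matrix.vecTail] <;> ring

lemma Vplus_span : Vplus = Submodule.span ℂ {aP, bP} := by
  apply le_antisymm
  · intro v hv
    rw [mem_Vplus_J, vecMulJ_coord] at hv
    have h0 : -I * v 1 = v 0 := congrFun hv 0
    have h2 : -I * v 3 = v 2 := congrFun hv 2
    have hv' : v = v 1 • aP + v 3 • bP := by
      funext i
      fin_cases i <;> simp [aP, bP]
      · rw [← h0]; ring
      · rw [← h2]; ring
    rw [hv']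
    exact Submodule.add_mem _
      (Submodule.smul_mem _ _ (Submodule.subset_span (Set.mem_insert _ _)))
      (Submodule.smul_mem _ _ (Submodule.subset_span (Set.mem_insert_of_mem _ rfl)))
  · rw [Submodule.span_le]
    rintro x (rfl | rfl) <;>
    · rw [SetLike.mem_coe, mem_Vplus_J, vecMulJ_coord]
      funext i
      fin_cases i <;> simp [aP, bP]

lemma Vminus_span : Vminus = Submodule.span ℂ {aM, bM} := by
  apply le_antisymm
  · intro v hv
    rw [mem_Vminus_J, vecMulJ_coord] at hv
    have h0 : -I * v 1 = -v 0 := congrFun hv 0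
    have h2 : -I * v 3 = -v 2 := congrFun hv 2
    have hv' : v = v 1 • aM + v 3 • bM := by
      funext i
      fin_cases i <;> simp [aM, bM]
      · have := congrArg Neg.neg h0; simp at this; rw [← this]; ring
      · have := congrArg Neg.neg h2; simp at this; rw [← this]; ring
    rw [hv']
    exact Submodule.add_mem _
      (Submodule.smul_mem _ _ (Submodule.subset_span (Set.mem_insert _ _)))
      (Submodule.smul_mem _ _ (Submodule.subset_span (Set.mem_insert_of_mem _ rfl)))
  · rw [Submodule.span_le]
    rintro x (rfl | rfl) <;>
    · rw [SetLike.mem_coe, mem_Vminus_J, vecMulJ_coord]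
      funext i
      fin_cases i <;> simp [aM, bM]

lemma finrank_Vplus : Module.finrank ℂ Vplus = 2 := by
  have hli : LinearIndependent ℂ ![aP, bP] := by
    rw [linearIndependent_fin2]
    constructor
    · intro h
      have := congrFun h 3
      simp [bP] at this
    · intro c h
      have := congrFun h 1
      simp [aP, bP] at this
  have hr : Set.range ![aP, bP] = {aP, bP} := by
    ext x; simp [Fin.exists_fin_two]; tauto
  rw [Vplus_span, ← hr, finrank_span_eq_card hli]
  simp

lemma finrank_Vminus : Module.finrank ℂ Vminus = 2 := by
  have hli : LinearIndependent ℂ ![aM, bM] := by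
    rw [linearIndependent_fin2]
    constructor
    · intro h
      have := congrFun h 3
      simp [bM] at this
    · intro c h
      have := congrFun h 1
      simp [aM, bM] at this
  have hr : Set.range ![aM, bM] = {aM, bM} := by
    ext x; simp [Fin.exists_fin_two]; tauto
  rw [Vminus_span, ← hr, finrank_span_eq_card hli]
  simp

/-! ### The dimension of a Lagrangian subspace -/

abbrev E4 := EuclideanSpace ℂ (Fin 4)

noncomputable def eE : (Fin 4 → ℂ) ≃ₗ[ℂ] E4 := (WithLp.linearEquiv 2 ℂ (Fin 4 → ℂ)).symm

lemma eE_apply (x : Fin 4 → ℂ) (i : Fin 4) : eE x i = x i := rfl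
lemma eE_symm_apply (x : E4) (i : Fin 4) : eE.symm x i = x i := rfl

noncomputable def fJ : E4 →ₗ[ℂ] E4 :=
  eE.toLinearMap ∘ₗ (Matrix.vecMulLinear matJ) ∘ₗ eE.symm.toLinearMap

lemma fJ_invol : Function.Involutive fJ := by
  intro x
  show eE ((eE.symm (eE ((eE.symm x) ᵥ* matJ))) ᵥ* matJ) = x
  rw [LinearEquiv.symm_apply_apply, Matrix.vecMul_vecMul, hJJ, Matrix.vecMul_one,
    LinearEquiv.apply_symm_apply]

noncomputable def gJ : E4 ≃ₗ[ℂ] E4 := LinearEquiv.ofInvolutive fJ fJ_invol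

lemma inner_eq (s x : Fin 4 → ℂ) : (inner ℂ (eE s) (eE x) : ℂ) = x ⬝ᵥ star s := by
  rw [PiLp.inner_apply]
  simp [eE_apply, dotProduct, RCLike.inner_apply, mul_comm]

theorem finrank_S (S : Submodule ℂ (Fin 4 → ℂ))
    (hS : (S : Set (Fin 4 → ℂ)) =
      {w : Fin 4 → ℂ | ∀ s ∈ S, Matrix.vecMul w matJ ⬝ᵥ star s = 0}) :
    Module.finrank ℂ S = 2 := by
  set S' : Submodule ℂ E4 := S.map eE.toLinearMap with hS'
  have hmem : ∀ w : Fin 4 → ℂ, w ∈ S ↔ ∀ s ∈ S, w ᵥ* matJ ⬝ᵥ star s = 0 := by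
    intro w
    constructor
    · intro hw; have := hS ▸ (SetLike.mem_coe.mpr hw); exact this
    · intro h; have : w ∈ (S : Set (Fin 4 → ℂ)) := hS ▸ h; exact this
  have key : S'.map gJ.toLinearMap = S'ᗮ := by
    ext x
    constructor
    · rintro ⟨y, ⟨w, hw, rfl⟩, rfl⟩
      rw [Submodule.mem_orthogonal]
      rintro u ⟨s, hs, rfl⟩
      have : gJ (eE w) = eE (w ᵥ* matJ) := by
        show eE ((eE.symm (eE w)) ᵥ* matJ) = _
        rw [LinearEquiv.symm_apply_apply]
      erw [this, inner_eq]
      exact (hmem w).mp hw s hs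
    · intro hx
      refine ⟨gJ x, ?_, fJ_invol x⟩
      refine ⟨eE.symm (gJ x), ?_, by simp⟩
      rw [SetLike.mem_coe, hmem]
      intro s hs
      have h1 : (eE.symm (gJ x)) ᵥ* matJ = eE.symm x := by
        have := fJ_invol x
        have h2 : gJ x = eE ((eE.symm x) ᵥ* matJ) := rfl
        funext i
        rw [eE_symm_apply]
        conv_rhs => rw [← this]
        rfl
      rw [h1]
      have h5 := (Submodule.mem_orthogonal S' x).mp hx (eE s) ⟨s, hs, rfl⟩
      have h6 : (inner ℂ (eE s) (eE (eE.symm x)) : ℂ) = 0 := by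
        rwa [LinearEquiv.apply_symm_apply]
      rw [inner_eq] at h6
      exact h6
  have h1 : Module.finrank ℂ S' = Module.finrank ℂ S := eE.finrank_map_eq S
  have h2 : Module.finrank ℂ (S'.map gJ.toLinearMap) = Module.finrank ℂ S' := gJ.finrank_map_eq S'
  have h3 := Submodule.finrank_add_finrank_orthogonal S'
  rw [← key, h2] at h3
  have h4 : Module.finrank ℂ E4 = 4 := by simp
  omega

theorem stmt9 (S : Submodule ℂ (Fin 4 → ℂ))
    (hS : (S : Set (Fin 4 → ℂ)) =
      {w : Fin 4 → ℂ | ∀ s ∈ S, Matrix.vecMul w matJ ⬝ᵥ star s = 0}) :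
    ∃ U : (Fin 4 → ℂ) →ₗ[ℂ] (Fin 4 → ℂ),
      IsUnitaryPlusMinus U ∧ (S : Set (Fin 4 → ℂ)) = SU U := by
  classical
  have hmem : ∀ w : Fin 4 → ℂ, w ∈ S ↔ ∀ s ∈ S, w ᵥ* matJ ⬝ᵥ star s = 0 := by
    intro w
    constructor
    · intro hw; have := hS ▸ (SetLike.mem_coe.mpr hw); exact this
    · intro h; have : w ∈ (S : Set (Fin 4 → ℂ)) := hS ▸ h; exact this
  have hB : ∀ s ∈ S, ∀ t ∈ S, s ᵥ* matJ ⬝ᵥ star t = 0 :=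
    fun s hs t ht => (hmem s).mp hs t ht
  have hform : ∀ s ∈ S, ∀ t ∈ S,
      (s ᵥ* Pplus) ⬝ᵥ star (t ᵥ* Pplus) = (s ᵥ* Pminus) ⬝ᵥ star (t ᵥ* Pminus) := by
    intro s hs t ht
    have h := hB s hs t ht
    rw [form_decomp] at h
    exact sub_eq_zero.mp h
  have hinjP : ∀ s ∈ S, s ᵥ* Pplus = 0 → s = 0 := by
    intro s hs h
    have h1 := (hform s hs s hs).symm
    rw [h] at h1
    simp only [zero_dotProduct] at h1
    have h2 := self_dot_zero _ h1
    have h3 := decomp s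
    rw [h, h2] at h3
    simpa using h3
  have hinjM : ∀ s ∈ S, s ᵥ* Pminus = 0 → s = 0 := by
    intro s hs h
    have h1 := hform s hs s hs
    rw [h] at h1
    simp only [zero_dotProduct] at h1
    have h2 := self_dot_zero _ h1
    have h3 := decomp s
    rw [h, h2] at h3
    simpa using h3
  have hfr : Module.finrank ℂ S = 2 := finrank_S S hS
  -- the projection to Vplus restricted to S
  let p : S →ₗ[ℂ] Vplus :=
    LinearMap.codRestrict Vplus ((Matrix.vecMulLinear Pplus) ∘ₗ S.subtype)
      (fun s => ⟨(s : Fin 4 → ℂ), rfl⟩)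
  have hp_val : ∀ s : S, ((p s : Fin 4 → ℂ)) = (s : Fin 4 → ℂ) ᵥ* Pplus := fun s => rfl
  have hpinj : Function.Injective p := by
    intro s t h
    have h' : (s : Fin 4 → ℂ) ᵥ* Pplus = (t : Fin 4 → ℂ) ᵥ* Pplus := by
      rw [← hp_val, ← hp_val, h]
    have hst : ((s - t : S) : Fin 4 → ℂ) ᵥ* Pplus = 0 := by
      push_cast
      rw [Matrix.sub_vecMul, h', sub_self]
    have := hinjP _ (S.sub_mem s.2 t.2) hst
    have : (s - t : S) = 0 := Subtype.ext this
    exact sub_eq_zero.mp this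
  have hpsurj : Function.Surjective p := by
    rw [← LinearMap.range_eq_top]
    apply Submodule.eq_top_of_finrank_eq
    rw [LinearMap.finrank_range_of_inj hpinj, hfr, finrank_Vplus]
  -- the projection to Vminus restricted to S
  let p' : S →ₗ[ℂ] Vminus :=
    LinearMap.codRestrict Vminus ((Matrix.vecMulLinear Pminus) ∘ₗ S.subtype)
      (fun s => ⟨(s : Fin 4 → ℂ), rfl⟩)
  have hp'_val : ∀ s : S, ((p' s : Fin 4 → ℂ)) = (s : Fin 4 → ℂ) ᵥ* Pminus := fun s => rfl
  have hp'inj : Function.Injective p' := by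
    intro s t h
    have h' : (s : Fin 4 → ℂ) ᵥ* Pminus = (t : Fin 4 → ℂ) ᵥ* Pminus := by
      rw [← hp'_val, ← hp'_val, h]
    have hst : ((s - t : S) : Fin 4 → ℂ) ᵥ* Pminus = 0 := by
      push_cast
      rw [Matrix.sub_vecMul, h', sub_self]
    have := hinjM _ (S.sub_mem s.2 t.2) hst
    have : (s - t : S) = 0 := Subtype.ext this
    exact sub_eq_zero.mp this
  have hp'surj : Function.Surjective p' := by
    rw [← LinearMap.range_eq_top]
    apply Submodule.eq_top_of_finrank_eq
    rw [LinearMap.finrank_range_of_inj hp'inj, hfr, finrank_Vminus]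
  let pe : S ≃ₗ[ℂ] Vplus := LinearEquiv.ofBijective p ⟨hpinj, hpsurj⟩
  let q : Vplus ≃ₗ[ℂ] S := pe.symm
  let U : (Fin 4 → ℂ) →ₗ[ℂ] (Fin 4 → ℂ) :=
    (Matrix.vecMulLinear Pminus) ∘ₗ S.subtype ∘ₗ (q : Vplus →ₗ[ℂ] S) ∘ₗ
      (LinearMap.codRestrict Vplus (Matrix.vecMulLinear Pplus) (fun x => ⟨x, rfl⟩))
  have hq : ∀ y : Vplus, ((q y : S) : Fin 4 → ℂ) ᵥ* Pplus = (y : Fin 4 → ℂ) := by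
    intro y
    exact congrArg Subtype.val (pe.apply_symm_apply y)
  have hU : ∀ v, ∀ hv : v ∈ Vplus, U v = ((q ⟨v, hv⟩ : S) : Fin 4 → ℂ) ᵥ* Pminus := by
    intro v hv
    have harg : (LinearMap.codRestrict Vplus (Matrix.vecMulLinear Pplus)
        (fun x => ⟨x, rfl⟩) v) = (⟨v, hv⟩ : Vplus) :=
      Subtype.ext ((mem_Vplus v).mp hv)
    show ((q (LinearMap.codRestrict Vplus (Matrix.vecMulLinear Pplus)
        (fun x => ⟨x, rfl⟩) v) : S) : Fin 4 → ℂ) ᵥ* Pminus = _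
    rw [harg]
  have hqS : ∀ (x : Fin 4 → ℂ) (hx : x ∈ S),
      (q ⟨x ᵥ* Pplus, ⟨x, rfl⟩⟩ : S) = ⟨x, hx⟩ := by
    intro x hx
    have : pe ⟨x, hx⟩ = ⟨x ᵥ* Pplus, ⟨x, rfl⟩⟩ := Subtype.ext rfl
    rw [← this]
    exact pe.symm_apply_apply _
  refine ⟨U, ⟨?_, ?_, ?_⟩, ?_⟩
  · -- U maps Vplus into Vminus
    intro v hv
    rw [hU v hv]
    exact ⟨_, rfl⟩
  · -- isometry
    intro v hv w hw
    have hsv := (q ⟨v, hv⟩ : S).2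
    have hsw := (q ⟨w, hw⟩ : S).2
    have h := hform _ hsv _ hsw
    rw [hq ⟨v, hv⟩, hq ⟨w, hw⟩] at h
    rw [hU v hv, hU w hw]
    exact h.symm
  · -- surjectivity onto Vminus
    intro w hw
    obtain ⟨s, hs⟩ := hp'surj ⟨w, hw⟩
    refine ⟨(s : Fin 4 → ℂ) ᵥ* Pplus, ⟨s, rfl⟩, ?_⟩
    have h1 : (q ⟨(s : Fin 4 → ℂ) ᵥ* Pplus, ⟨s, rfl⟩⟩ : S) = s := by
      have : pe s = ⟨(s : Fin 4 → ℂ) ᵥ* Pplus, ⟨s, rfl⟩⟩ := Subtype.ext rfl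
      rw [← this]
      exact pe.symm_apply_apply s
    rw [hU ((s : Fin 4 → ℂ) ᵥ* Pplus) ⟨s, rfl⟩, h1]
    have := congrArg (fun z : Vminus => (z : Fin 4 → ℂ)) hs
    simpa [hp'_val] using this
  · -- S = SU U
    ext x
    simp only [SetLike.mem_coe, SU, Set.mem_setOf_eq]
    constructor
    · intro hx
      refine ⟨x ᵥ* Pplus, ⟨x, rfl⟩, ?_⟩
      rw [hU (x ᵥ* Pplus) ⟨x, rfl⟩, hqS x hx]
      exact decomp x
    · rintro ⟨v, hv, rfl⟩
      rw [hU v hv]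
      have h1 : ((q ⟨v, hv⟩ : S) : Fin 4 → ℂ) ᵥ* Pplus = v := hq ⟨v, hv⟩
      have h2 := decomp ((q ⟨v, hv⟩ : S) : Fin 4 → ℂ)
      have : v + ((q ⟨v, hv⟩ : S) : Fin 4 → ℂ) ᵥ* Pminus = ((q ⟨v, hv⟩ : S) : Fin 4 → ℂ) := by
        rw [h1] at h2; exact h2.symm
      rw [this]
      exact (q ⟨v, hv⟩ : S).2
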